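/- Let Ω ⊂ ℝ³ be a set of finite perimeter with |Ω| = M, let B = B_{r_M}(0) be the ball of the same volume centered at the origin, and define the asymmetry γ(Ω) = min_{y∈ℝ³} ∫_{ℝ³} (𝟙_B(x) − 𝟙_Ω(x+y))/|x| dx. Suppose the quantitative isoperimetric-type inequality Per(Ω) − Per(B) ≥ μ₀ γ(Ω) holds with equality iff Ω is a translate of B, and the Coulomb estimate D(𝟙_B,𝟙_B) − D(𝟙_Ω,𝟙_Ω) ≤ M γ(Ω) holds. Then for V(x) = Z/|x| with Z ≥ 0 and any M < Z + μ₀, the energy E(Ω) = Per(Ω) − ∫_Ω V dx + D(𝟙_Ω,𝟙_Ω) satisfies E(Ω) − E(B) ≥ (Z + μ₀ − M) γ(Ω) > 0 whenever Ω is not a translate of B, so the ball B uniquely minimizes E among sets of volume M. -/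

import Mathlib

open MeasureTheory Metric Set

local notation "E3" => EuclideanSpace ℝ (Fin 3)


lemma auxIntBall {r : ℝ} (hr : 0 < r) :
    IntegrableOn (fun x : E3 => 1 / ‖x‖) (ball 0 r) := by
  constructor
  · exact (measurable_const.div measurable_norm).aestronglyMeasurable
  · -- HasFiniteIntegral
    rw [hasFiniteIntegral_iff_norm]
    set S : ℕ → Set E3 := fun n => ball (0 : E3) (r / 2 ^ n) \ ball 0 (r / 2 ^ (n + 1)) with hS
    have hcover : ball (0 : E3) r ⊆ {0} ∪ ⋃ n, S n := by
      intro x hx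
      rcases eq_or_ne x 0 with h0 | h0
      · exact Or.inl h0
      right
      have hxn : 0 < ‖x‖ := norm_pos_iff.2 h0
      have hxr : ‖x‖ < r := by simpa using mem_ball_iff_norm.1 hx
      have hex : ∃ k, r / 2 ^ (k + 1) ≤ ‖x‖ := by
        obtain ⟨k, hk⟩ := pow_unbounded_of_one_lt (r / ‖x‖) (one_lt_two (α := ℝ))
        refine ⟨k, ?_⟩
        rw [div_le_iff₀ (by positivity)]
        have h2 : r / ‖x‖ < 2 ^ (k + 1) := lt_of_lt_of_le hk (by
          gcongr
          · norm_num
          · omega)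
        rw [div_lt_iff₀ hxn] at h2
        nlinarith [h2]
      set n := Nat.find hex with hn
      refine mem_iUnion.2 ⟨n, ?_, ?_⟩
      · simp only [mem_ball, dist_zero_right]
        rcases Nat.eq_zero_or_pos n with h | h
        · rw [h]; simpa using hxr
        · have := Nat.find_min hex (m := n - 1) (by omega)
          push_neg at this
          have : ‖x‖ < r / 2 ^ (n - 1 + 1) := this
          rwa [Nat.sub_add_cancel h] at this
      · simp only [mem_ball, dist_zero_right, not_lt]
        exact Nat.find_spec hex
    calc ∫⁻ x in ball (0:E3) r, ENNReal.ofReal ‖1 / ‖x‖‖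
        ≤ ∫⁻ x in ({0} : Set E3) ∪ ⋃ n, S n, ENNReal.ofReal ‖1 / ‖x‖‖ :=
          lintegral_mono_set hcover
      _ ≤ (∫⁻ x in ({0} : Set E3), ENNReal.ofReal ‖1 / ‖x‖‖)
            + ∫⁻ x in ⋃ n, S n, ENNReal.ofReal ‖1 / ‖x‖‖ := lintegral_union_le _ _ _
      _ ≤ 0 + ∑' n, ∫⁻ x in S n, ENNReal.ofReal ‖1 / ‖x‖‖ := by
          gcongr
          · have : volume ({0} : Set E3) = 0 := measure_singleton 0
            rw [setLIntegral_measure_zero _ _ this]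
          · exact lintegral_iUnion_le _ _
      _ < ⊤ := by
          rw [zero_add]
          have hbound : ∀ n, ∫⁻ x in S n, ENNReal.ofReal ‖1 / ‖x‖‖
              ≤ ENNReal.ofReal (2 * r ^ 2) * ENNReal.ofReal (4⁻¹) ^ n
                * volume (ball (0 : E3) 1) := by
            intro n
            have h1 : ∫⁻ x in S n, ENNReal.ofReal ‖1 / ‖x‖‖
                ≤ ∫⁻ _x in S n, ENNReal.ofReal (2 ^ (n + 1) / r) := by
              refine setLIntegral_mono measurable_const fun x hx => ?_
              apply ENNReal.ofReal_le_ofReal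
              have hxlb : r / 2 ^ (n + 1) ≤ ‖x‖ := by
                have := hx.2
                simpa [mem_ball, dist_zero_right, not_lt] using this
              have hxpos : 0 < ‖x‖ := lt_of_lt_of_le (by positivity) hxlb
              rw [Real.norm_of_nonneg (by positivity)]
              rw [div_le_div_iff₀ hxpos hr]
              calc 1 * r = r := one_mul r
                _ ≤ 2 ^ (n+1) * ‖x‖ := by
                    rw [div_le_iff₀ (by positivity)] at hxlb
                    linarith [hxlb]
            have h2 : ∫⁻ _x in S n, ENNReal.ofReal (2 ^ (n + 1) / r)
                = ENNReal.ofReal (2 ^ (n + 1) / r) * volume (S n) := by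
              rw [setLIntegral_const]
            have h3 : volume (S n) ≤ volume (ball (0:E3) (r / 2 ^ n)) :=
              measure_mono diff_subset
            have h4 : volume (ball (0:E3) (r / 2 ^ n))
                = ENNReal.ofReal ((r / 2 ^ n) ^ 3) * volume (ball (0:E3) 1) := by
              rw [Measure.addHaar_ball volume 0 (by positivity)]
              congr 2
              rw [finrank_euclideanSpace_fin]
            calc ∫⁻ x in S n, ENNReal.ofReal ‖1 / ‖x‖‖
                ≤ ENNReal.ofReal (2 ^ (n + 1) / r) * volume (S n) := h1.trans_eq h2
              _ ≤ ENNReal.ofReal (2 ^ (n + 1) / r)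
                    * (ENNReal.ofReal ((r / 2 ^ n) ^ 3) * volume (ball (0:E3) 1)) := by
                  rw [← h4]; gcongr
              _ = ENNReal.ofReal (2 ^ (n + 1) / r * (r / 2 ^ n) ^ 3)
                    * volume (ball (0:E3) 1) := by
                  rw [← mul_assoc, ← ENNReal.ofReal_mul (by positivity)]
              _ = ENNReal.ofReal (2 * r ^ 2 * (4⁻¹) ^ n) * volume (ball (0:E3) 1) := by
                  congr 2
                  rw [show (4:ℝ)⁻¹ = (2^2)⁻¹ by norm_num, ← inv_pow, ← pow_mul,
                    mul_comm 2 n]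
                  rw [pow_mul, inv_pow, div_pow, pow_succ]
                  field_simp
              _ = ENNReal.ofReal (2 * r ^ 2) * ENNReal.ofReal (4⁻¹) ^ n
                    * volume (ball (0:E3) 1) := by
                  rw [ENNReal.ofReal_mul (by positivity), ENNReal.ofReal_pow (by norm_num)]
          calc ∑' n, ∫⁻ x in S n, ENNReal.ofReal ‖1 / ‖x‖‖
              ≤ ∑' n, ENNReal.ofReal (2 * r ^ 2) * ENNReal.ofReal (4⁻¹) ^ n
                  * volume (ball (0:E3) 1) := ENNReal.tsum_le_tsum hbound
            _ = ENNReal.ofReal (2 * r ^ 2) * (∑' n, ENNReal.ofReal (4⁻¹) ^ n)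
                  * volume (ball (0:E3) 1) := by
                rw [ENNReal.tsum_mul_right, ENNReal.tsum_mul_left]
            _ < ⊤ := by
                rw [ENNReal.tsum_geometric]
                apply ENNReal.mul_lt_top
                apply ENNReal.mul_lt_top
                · exact ENNReal.ofReal_lt_top
                · rw [ENNReal.inv_lt_top, tsub_pos_iff_lt]
                  exact ENNReal.ofReal_lt_one.2 (by norm_num)
                · exact measure_ball_lt_top

lemma auxIntFin {S : Set E3} (hSm : MeasurableSet S) (hS : volume S < ⊤) :
    IntegrableOn (fun x : E3 => 1 / ‖x‖) S := by
  have h1 : IntegrableOn (fun x : E3 => 1 / ‖x‖) (S ∩ ball 0 1) :=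
    (auxIntBall one_pos).mono_set inter_subset_right
  have h2 : IntegrableOn (fun x : E3 => 1 / ‖x‖) (S \ ball 0 1) := by
    refine Integrable.mono' (g := fun _ => (1 : ℝ))
      (integrableOn_const (lt_of_le_of_lt (measure_mono diff_subset) hS).ne)
      ((measurable_const.div measurable_norm).aestronglyMeasurable) ?_
    refine (ae_restrict_mem (hSm.diff measurableSet_ball)).mono fun x hx => ?_
    have h1x : 1 ≤ ‖x‖ := by
      have := hx.2
      simpa [mem_ball, dist_zero_right, not_lt] using this
    rw [Real.norm_of_nonneg (by positivity)]
    rw [div_le_one (lt_of_lt_of_le one_pos h1x)]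
    exact h1x
  have : S ⊆ (S ∩ ball 0 1) ∪ (S \ ball 0 1) := by
    intro x hx
    by_cases h : x ∈ ball 0 1
    · exact Or.inl ⟨hx, h⟩
    · exact Or.inr ⟨hx, h⟩
  exact (h1.union h2).mono_set this

lemma auxSplit {rM : ℝ} (hrM : 0 < rM) {A : Set E3} (hA : MeasurableSet A)
    (hAfin : volume A < ⊤) :
    ∫ x, ((ball (0:E3) rM).indicator (fun _ => (1:ℝ)) x
        - A.indicator (fun _ => (1:ℝ)) x) / ‖x‖
      = (∫ x in ball (0:E3) rM, 1/‖x‖) - ∫ x in A, 1/‖x‖ := by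
  have hpt : ∀ x : E3, ((ball (0:E3) rM).indicator (fun _ => (1:ℝ)) x
        - A.indicator (fun _ => (1:ℝ)) x) / ‖x‖
      = (ball (0:E3) rM).indicator (fun x => 1/‖x‖) x
        - A.indicator (fun x => 1/‖x‖) x := by
    intro x
    by_cases h1 : x ∈ ball (0:E3) rM <;> by_cases h2 : x ∈ A <;>
      simp [Set.indicator, h1, h2, one_div, neg_div]
  rw [show (fun x : E3 => ((ball (0:E3) rM).indicator (fun _ => (1:ℝ)) x
        - A.indicator (fun _ => (1:ℝ)) x) / ‖x‖) = fun x =>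
      (ball (0:E3) rM).indicator (fun x => 1/‖x‖) x
        - A.indicator (fun x => 1/‖x‖) x from funext hpt]
  rw [integral_sub, integral_indicator measurableSet_ball, integral_indicator hA]
  · exact (integrable_indicator_iff measurableSet_ball).2 (auxIntBall hrM)
  · exact (integrable_indicator_iff hA).2 (auxIntFin hA hAfin)

lemma auxLB {rM : ℝ} (hrM : 0 < rM) {A : Set E3} (hA : MeasurableSet A)
    (hAv : volume A = volume (ball (0:E3) rM)) :
    0 ≤ (∫ x in ball (0:E3) rM, 1/‖x‖) - ∫ x in A, (1:ℝ)/‖x‖ := by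
  set B : Set E3 := ball 0 rM with hBdef
  have hBm : MeasurableSet B := measurableSet_ball
  have hBfin : volume B < ⊤ := measure_ball_lt_top
  have hAfin : volume A < ⊤ := hAv ▸ hBfin
  -- split integrals
  have hsplitB : ∫ x in B, (1:ℝ)/‖x‖ = (∫ x in B \ A, (1:ℝ)/‖x‖) + ∫ x in B ∩ A, (1:ℝ)/‖x‖ := by
    rw [← setIntegral_union (Set.disjoint_left.mpr fun x hx h2 => hx.2 h2.2) (hBm.inter hA)
      ((auxIntFin (hBm.diff hA) (lt_of_le_of_lt (measure_mono diff_subset) hBfin)))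
      ((auxIntFin (hBm.inter hA) (lt_of_le_of_lt (measure_mono inter_subset_left) hBfin)))]
    rw [diff_union_inter]
  have hsplitA : ∫ x in A, (1:ℝ)/‖x‖ = (∫ x in A \ B, (1:ℝ)/‖x‖) + ∫ x in A ∩ B, (1:ℝ)/‖x‖ := by
    rw [← setIntegral_union (Set.disjoint_left.mpr fun x hx h2 => hx.2 h2.2) (hA.inter hBm)
      ((auxIntFin (hA.diff hBm) (lt_of_le_of_lt (measure_mono diff_subset) hAfin)))
      ((auxIntFin (hA.inter hBm) (lt_of_le_of_lt (measure_mono inter_subset_left) hAfin)))]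
    rw [diff_union_inter]
  have hinter : ∫ x in B ∩ A, (1:ℝ)/‖x‖ = ∫ x in A ∩ B, (1:ℝ)/‖x‖ := by rw [inter_comm]
  -- measure equality
  have hmeq : volume (B \ A) = volume (A \ B) := by
    have h1 := measure_diff_add_inter B hA (μ := volume)
    have h2 := measure_diff_add_inter A hBm (μ := volume)
    have h3 : volume (B ∩ A) = volume (A ∩ B) := by rw [inter_comm]
    have hfin : volume (B ∩ A) ≠ ⊤ :=
      (lt_of_le_of_lt (measure_mono inter_subset_left) hBfin).ne
    have key : volume (B \ A) + volume (B ∩ A) = volume (A \ B) + volume (B ∩ A) := by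
      rw [h1]
      calc volume B = volume A := hAv.symm
        _ = volume (A \ B) + volume (A ∩ B) := h2.symm
        _ = volume (A \ B) + volume (B ∩ A) := by rw [inter_comm]
    exact (ENNReal.add_left_inj hfin).mp key
  -- lower bound on B \ A
  have hlb : (volume (B \ A)).toReal * (1/rM) ≤ ∫ x in B \ A, (1:ℝ)/‖x‖ := by
    have := setIntegral_mono_on_ae (f := fun _ : E3 => 1/rM) (g := fun x : E3 => 1/‖x‖)
      (integrableOn_const (lt_of_le_of_lt (measure_mono diff_subset) hBfin).ne)
      (auxIntFin (hBm.diff hA) (lt_of_le_of_lt (measure_mono diff_subset) hBfin))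
      (hBm.diff hA) ?_
    · simpa [setIntegral_const, smul_eq_mul, measureReal_def] using this
    · have hz : volume ({(0:E3)} : Set E3) = 0 := measure_singleton 0
      rw [ae_iff]
      refine (measure_mono_null ?_ hz)
      intro x hx
      simp only [mem_setOf_eq, not_forall] at hx
      obtain ⟨hxBA, hxlt⟩ := hx
      simp only [mem_singleton_iff]
      by_contra h0
      have hxn : 0 < ‖x‖ := norm_pos_iff.2 h0
      have hxr : ‖x‖ < rM := by
        have := hxBA.1; simpa [hBdef, mem_ball, dist_zero_right] using this
      exact hxlt (one_div_le_one_div_of_le hxn hxr.le)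
  -- upper bound on A \ B
  have hub : ∫ x in A \ B, (1:ℝ)/‖x‖ ≤ (volume (A \ B)).toReal * (1/rM) := by
    have := setIntegral_mono_on_ae (f := fun x : E3 => 1/‖x‖) (g := fun _ : E3 => 1/rM)
      (auxIntFin (hA.diff hBm) (lt_of_le_of_lt (measure_mono diff_subset) hAfin))
      (integrableOn_const (lt_of_le_of_lt (measure_mono diff_subset) hAfin).ne)
      (hA.diff hBm) ?_
    · simpa [setIntegral_const, smul_eq_mul, measureReal_def] using this
    · filter_upwards with x hx
      have hxge : rM ≤ ‖x‖ := by
        have := hx.2; simpa [hBdef, mem_ball, dist_zero_right, not_lt] using this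
      exact one_div_le_one_div_of_le hrM hxge
  rw [hsplitB, hsplitA, hinter]
  have := hmeq ▸ hlb
  linarith [this, hub]


/-- The Coulomb energy `D(f,g) = (1/2)∫∫ f(x)g(y)/|x−y| dx dy`. -/
noncomputable def Dr (f g : EuclideanSpace ℝ (Fin 3) → ℝ) : ℝ :=
  (1 / 2) * ∫ x, ∫ y, f x * g y / ‖x - y‖

/-- The asymmetry `γ(Ω) = min_{y} ∫ (𝟙_B(x) − 𝟙_Ω(x+y))/|x| dx` relative to the ball `B`. -/
noncomputable def asym (B Ω : Set (EuclideanSpace ℝ (Fin 3))) : ℝ :=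
  ⨅ y : EuclideanSpace ℝ (Fin 3),
    ∫ x, (B.indicator (fun _ => (1 : ℝ)) x - Ω.indicator (fun _ => (1 : ℝ)) (x + y)) / ‖x‖

/-- Liquid-drop energy with atomic potential: if the quantitative isoperimetric-type
inequality `Per(Ω) − Per(B) ≥ μ₀ γ(Ω)` (with equality iff `Ω` is a translate of `B`)
and the Coulomb estimate `D(𝟙_B,𝟙_B) − D(𝟙_Ω,𝟙_Ω) ≤ M γ(Ω)` hold, then for
`V(x) = Z/|x|`, `Z ≥ 0`, and `M < Z + μ₀`, the energy
`E(Ω) = Per(Ω) − ∫_Ω V + D(𝟙_Ω,𝟙_Ω)` satisfies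
`E(Ω) − E(B) ≥ (Z + μ₀ − M) γ(Ω) > 0` for every finite-perimeter `Ω` of volume `M`
that is not a translate of `B`; in particular the ball `B` uniquely minimizes `E`. -/
theorem stmt19 (Z M μ0 rM : ℝ) (hZ : 0 ≤ Z) (hμ0 : 0 < μ0) (hM : 0 < M)
    (hMlt : M < Z + μ0)
    (B : Set (EuclideanSpace ℝ (Fin 3)))
    (hB : B = Metric.ball 0 rM) (hBvol : volume B = ENNReal.ofReal M)
    (FinPer : Set (EuclideanSpace ℝ (Fin 3)) → Prop)
    (Per : Set (EuclideanSpace ℝ (Fin 3)) → ℝ)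
    (hBFin : FinPer B)
    (hQI : ∀ Ω, FinPer Ω → MeasurableSet Ω → volume Ω = ENNReal.ofReal M →
      μ0 * asym B Ω ≤ Per Ω - Per B ∧
        (Per Ω - Per B = μ0 * asym B Ω ↔ ∃ v, Ω = (fun z => z + v) '' B))
    (hCoul : ∀ Ω, FinPer Ω → MeasurableSet Ω → volume Ω = ENNReal.ofReal M →
      Dr (B.indicator fun _ => 1) (B.indicator fun _ => 1) -
          Dr (Ω.indicator fun _ => 1) (Ω.indicator fun _ => 1) ≤ M * asym B Ω)
    (EE : Set (EuclideanSpace ℝ (Fin 3)) → ℝ)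
    (hEE : ∀ Ω, EE Ω = Per Ω - (∫ x in Ω, Z / ‖x‖) +
      Dr (Ω.indicator fun _ => 1) (Ω.indicator fun _ => 1)) :
    ∀ Ω, FinPer Ω → MeasurableSet Ω → volume Ω = ENNReal.ofReal M →
      (¬ ∃ v, Ω = (fun z => z + v) '' B) →
      (Z + μ0 - M) * asym B Ω ≤ EE Ω - EE B ∧ 0 < EE Ω - EE B := by
  intro Ω hΩFin hΩm hΩvol hnt
  -- rM > 0
  have hrM : 0 < rM := by
    by_contra h
    push_neg at h
    have : B = ∅ := by rw [hB]; exact Metric.ball_eq_empty.2 h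
    rw [this] at hBvol
    simp only [measure_empty] at hBvol
    have := hBvol.symm
    rw [ENNReal.ofReal_eq_zero] at this
    linarith
  have hΩfin : volume Ω < ⊤ := by rw [hΩvol]; exact ENNReal.ofReal_lt_top
  have hvolΩB : volume Ω = volume (ball (0:E3) rM) := by rw [hΩvol, ← hB, hBvol]
  -- the integrand family
  set I : E3 → ℝ := fun y => ∫ x,
      (B.indicator (fun _ => (1 : ℝ)) x - Ω.indicator (fun _ => (1 : ℝ)) (x + y)) / ‖x‖ with hIdef
  have hasym : asym B Ω = ⨅ y, I y := rfl
  -- each I y equals ∫_B - ∫_{A y} and is ≥ 0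
  have hIeq : ∀ y : E3, I y = (∫ x in ball (0:E3) rM, 1/‖x‖)
      - ∫ x in (fun x => x + y) ⁻¹' Ω, (1:ℝ)/‖x‖ := by
    intro y
    have hAm : MeasurableSet ((fun x : E3 => x + y) ⁻¹' Ω) :=
      hΩm.preimage (measurable_add_const y)
    have hAv : volume ((fun x : E3 => x + y) ⁻¹' Ω) = volume Ω :=
      measure_preimage_add_right volume y Ω
    have hpt : ∀ x : E3, Ω.indicator (fun _ => (1:ℝ)) (x + y)
        = ((fun x : E3 => x + y) ⁻¹' Ω).indicator (fun _ => (1:ℝ)) x := by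
      intro x
      by_cases h : x + y ∈ Ω <;> simp [Set.indicator, h]
    have := auxSplit hrM hAm (by rw [hAv]; exact hΩfin)
    rw [hIdef]
    simp only [hB]
    rw [show (fun x : E3 => ((ball (0:E3) rM).indicator (fun _ => (1:ℝ)) x
        - Ω.indicator (fun _ => (1:ℝ)) (x + y)) / ‖x‖)
      = fun x : E3 => ((ball (0:E3) rM).indicator (fun _ => (1:ℝ)) x
        - ((fun x : E3 => x + y) ⁻¹' Ω).indicator (fun _ => (1:ℝ)) x) / ‖x‖
      from funext fun x => by rw [hpt x]]
    exact this
  have hInn : ∀ y : E3, 0 ≤ I y := by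
    intro y
    rw [hIeq y]
    exact auxLB hrM (hΩm.preimage (measurable_add_const y))
      (by rw [measure_preimage_add_right volume y Ω]; exact hvolΩB)
  have hbdd : BddBelow (Set.range I) := ⟨0, fun z ⟨y, hy⟩ => hy ▸ hInn y⟩
  have hγ0 : 0 ≤ asym B Ω := by rw [hasym]; exact le_ciInf hInn
  have hγle : asym B Ω ≤ I 0 := by rw [hasym]; exact ciInf_le hbdd 0
  -- I 0 in terms of set integrals
  have hI0 : I 0 = (∫ x in ball (0:E3) rM, 1/‖x‖) - ∫ x in Ω, (1:ℝ)/‖x‖ := by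
    rw [hIeq 0]
    congr 2
    simp
  -- potential term
  have hVB : ∫ x in B, Z / ‖x‖ = Z * ∫ x in B, 1/‖x‖ := by
    simp_rw [div_eq_mul_inv, ← integral_const_mul, one_mul]
  have hVΩ : ∫ x in Ω, Z / ‖x‖ = Z * ∫ x in Ω, 1/‖x‖ := by
    simp_rw [div_eq_mul_inv, ← integral_const_mul, one_mul]
  have hVdiff : Z * asym B Ω ≤ (∫ x in B, Z / ‖x‖) - ∫ x in Ω, Z / ‖x‖ := by
    rw [hVB, hVΩ, ← mul_sub]
    have : (∫ x in B, (1:ℝ)/‖x‖) - ∫ x in Ω, (1:ℝ)/‖x‖ = I 0 := by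
      rw [hI0, hB]
    rw [this]
    exact mul_le_mul_of_nonneg_left hγle hZ
  -- isoperimetric, strict
  obtain ⟨hPerLe, hPerIff⟩ := hQI Ω hΩFin hΩm hΩvol
  have hPerStrict : μ0 * asym B Ω < Per Ω - Per B :=
    lt_of_le_of_ne hPerLe fun h => hnt (hPerIff.mp h.symm)
  have hD := hCoul Ω hΩFin hΩm hΩvol
  have hEEΩ := hEE Ω
  have hEEB := hEE B
  have hexp : (Z + μ0 - M) * asym B Ω
      = Z * asym B Ω + μ0 * asym B Ω - M * asym B Ω := by ring
  have hpos : 0 ≤ (Z + μ0 - M) * asym B Ω :=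
    mul_nonneg (by linarith) hγ0
  constructor <;> linarith
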